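/- arXiv:2506.23966 — 2 statements merged into one kernel-verified Lean document; each statement's English description precedes it below -/
import Mathlib

section
/- Let α > 0, C > 0, x̄ > 0 and x_max ≥ x̄, and define f(x) = ((x − x̄)² + C)·e^{2αx}. If C < 1/(4α²) − (2αx̄ − 1)²/(4α²), then 4α²C < 1, the point x₂ = x̄ + (−1 + √(1 − 4α²C))/(2α) satisfies 0 ≤ x₂ < x̄, and f attains its minimum over [0, x_max] at x₂; that is, f(x₂) ≤ f(x) for every x ∈ [0, x_max]. -/
set_option maxHeartbeats 1000000 in
theorem stmt_1 (α C xbar xmax : ℝ) (hα : 0 < α) (hC : 0 < C) (hxbar : 0 < xbar)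
    (hxmax : xbar ≤ xmax)
    (f : ℝ → ℝ) (hf : ∀ x, f x = ((x - xbar) ^ 2 + C) * Real.exp (2 * α * x))
    (hcond : C < 1 / (4 * α ^ 2) - (2 * α * xbar - 1) ^ 2 / (4 * α ^ 2)) :
    4 * α ^ 2 * C < 1 ∧
    0 ≤ xbar + (-1 + Real.sqrt (1 - 4 * α ^ 2 * C)) / (2 * α) ∧
    xbar + (-1 + Real.sqrt (1 - 4 * α ^ 2 * C)) / (2 * α) < xbar ∧
    ∀ x ∈ Set.Icc (0 : ℝ) xmax,
      f (xbar + (-1 + Real.sqrt (1 - 4 * α ^ 2 * C)) / (2 * α)) ≤ f x := by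
  have hα2 : (0:ℝ) < 4 * α ^ 2 := by positivity
  have h0 : C < (1 - (2 * α * xbar - 1) ^ 2) / (4 * α ^ 2) := by
    rw [sub_div]; simpa using hcond
  have h1 : 4 * α ^ 2 * C < 1 - (2 * α * xbar - 1) ^ 2 := by
    have := (lt_div_iff₀ hα2).mp h0
    linarith
  have h4 : 4 * α ^ 2 * C < 1 := by nlinarith [sq_nonneg (2 * α * xbar - 1)]
  set s : ℝ := Real.sqrt (1 - 4 * α ^ 2 * C) with hs_def
  have hs0 : 0 ≤ s := Real.sqrt_nonneg _
  have hs2 : s ^ 2 = 1 - 4 * α ^ 2 * C := Real.sq_sqrt (by linarith)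
  have hsl : 2 * α * xbar - 1 < s := by nlinarith
  have hsr : -s < 2 * α * xbar - 1 := by nlinarith
  have hs1 : s < 1 := by nlinarith [mul_pos hα2 hC]
  set x2 : ℝ := xbar + (-1 + s) / (2 * α) with hx2_def
  have hx2eq : 2 * α * x2 = 2 * α * xbar + (-1 + s) := by
    rw [hx2_def]; field_simp
  have h2x2 : 0 < 2 * α * x2 := by rw [hx2eq]; linarith
  have hx2nonneg : 0 ≤ x2 := by nlinarith [h2x2]
  have hx2lt : x2 < xbar := by
    have : 2 * α * x2 < 2 * α * xbar := by rw [hx2eq]; linarith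
    nlinarith [this]
  have hx2max : x2 ≤ xmax := le_of_lt (lt_of_lt_of_le hx2lt hxmax)
  -- replace f by an explicit function
  have hfF : f = fun x => ((x - xbar) ^ 2 + C) * Real.exp (2 * α * x) := funext hf
  subst hfF
  refine ⟨h4, hx2nonneg, hx2lt, ?_⟩
  -- derivative
  have hderiv : ∀ x : ℝ, HasDerivAt (fun x => ((x - xbar) ^ 2 + C) * Real.exp (2 * α * x))
      ((2 * (x - xbar) + 2 * α * ((x - xbar) ^ 2 + C)) * Real.exp (2 * α * x)) x := by
    intro x
    have h1' : HasDerivAt (fun x : ℝ => (x - xbar) ^ 2 + C) (2 * (x - xbar)) x := by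
      have := (((hasDerivAt_id x).sub_const xbar).pow 2).add_const C
      simpa using this
    have h2' : HasDerivAt (fun x : ℝ => Real.exp (2 * α * x)) (Real.exp (2 * α * x) * (2 * α)) x := by
      have hlin : HasDerivAt (fun x : ℝ => 2 * α * x) (2 * α) x := by
        simpa using (hasDerivAt_id x).const_mul (2 * α)
      exact hlin.exp
    have := h1'.mul h2'
    exact this.congr_deriv (by ring)
  have hdiff : Differentiable ℝ (fun x => ((x - xbar) ^ 2 + C) * Real.exp (2 * α * x)) :=
    fun x => (hderiv x).differentiableAt
  have hcont : Continuous (fun x => ((x - xbar) ^ 2 + C) * Real.exp (2 * α * x)) :=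
    hdiff.continuous
  -- sign of q on each side
  have hq_le : ∀ x : ℝ, 0 ≤ x → x ≤ x2 →
      2 * (x - xbar) + 2 * α * ((x - xbar) ^ 2 + C) ≤ 0 := by
    intro x hx0 hxle
    have ht1 : 2 * α * x ≤ 2 * α * xbar + (-1 + s) := by
      have := mul_le_mul_of_nonneg_left hxle (le_of_lt (by linarith : (0:ℝ) < 2 * α))
      linarith [hx2eq ▸ this]
    have ht2 : -s < 2 * α * (x - xbar) + 1 := by nlinarith [mul_nonneg (le_of_lt hα) hx0]
    have ht1' : 2 * α * (x - xbar) + 1 ≤ s := by linarith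
    have key : (2 * α * (x - xbar) + 1) ^ 2 ≤ s ^ 2 := by nlinarith
    have h2αq : 2 * α * (2 * (x - xbar) + 2 * α * ((x - xbar) ^ 2 + C)) ≤ 2 * α * 0 := by
      linarith [key, hs2]
    exact le_of_mul_le_mul_left h2αq (by linarith)
  have hq_ge : ∀ x : ℝ, x2 ≤ x →
      0 ≤ 2 * (x - xbar) + 2 * α * ((x - xbar) ^ 2 + C) := by
    intro x hxge
    have ht1 : 2 * α * xbar + (-1 + s) ≤ 2 * α * x := by
      have := mul_le_mul_of_nonneg_left hxge (le_of_lt (by linarith : (0:ℝ) < 2 * α))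
      linarith [hx2eq ▸ this]
    have ht1' : s ≤ 2 * α * (x - xbar) + 1 := by linarith
    have key : s ^ 2 ≤ (2 * α * (x - xbar) + 1) ^ 2 := by nlinarith
    have h2αq : 2 * α * 0 ≤ 2 * α * (2 * (x - xbar) + 2 * α * ((x - xbar) ^ 2 + C)) := by
      linarith [key, hs2]
    exact le_of_mul_le_mul_left h2αq (by linarith)
  -- antitone on [0, x2]
  have hanti : AntitoneOn (fun x => ((x - xbar) ^ 2 + C) * Real.exp (2 * α * x))
      (Set.Icc 0 x2) := by
    apply antitoneOn_of_deriv_nonpos (convex_Icc 0 x2) (hcont.continuousOn)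
      (fun x _ => (hdiff x).differentiableWithinAt)
    intro x hx
    rw [interior_Icc] at hx
    rw [(hderiv x).deriv]
    exact mul_nonpos_of_nonpos_of_nonneg (hq_le x (le_of_lt hx.1) (le_of_lt hx.2))
      (Real.exp_nonneg _)
  -- monotone on [x2, xmax]
  have hmono : MonotoneOn (fun x => ((x - xbar) ^ 2 + C) * Real.exp (2 * α * x))
      (Set.Icc x2 xmax) := by
    apply monotoneOn_of_deriv_nonneg (convex_Icc x2 xmax) (hcont.continuousOn)
      (fun x _ => (hdiff x).differentiableWithinAt)
    intro x hx
    rw [interior_Icc] at hx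
    rw [(hderiv x).deriv]
    exact mul_nonneg (hq_ge x (le_of_lt hx.1)) (Real.exp_nonneg _)
  intro x hx
  rcases le_or_gt x x2 with hcase | hcase
  · exact hanti ⟨hx.1, hcase⟩ ⟨hx2nonneg, le_refl x2⟩ hcase
  · exact hmono ⟨le_refl x2, hx2max⟩ ⟨le_of_lt hcase, hx.2⟩ (le_of_lt hcase)
end

section
/- Let α ≥ 0, C ≥ 0 and x̄ be real, and define f(x) = ((x − x̄)² + C)·e^{2αx}. Then f(x̄ − αC) ≤ f(x̄) = C·e^{2αx̄}; equivalently, (1 + α²C)·e^{−2α²C} ≤ 1, so placing the pinching antenna at x̄ − αC yields a received SNR at least as large as placing it at x̄. -/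
lemma key (t : ℝ) (ht : 0 ≤ t) : (1 + t) * Real.exp (-(2 * t)) ≤ 1 := by
  have h1 : 1 + t ≤ Real.exp t := by linarith [Real.add_one_le_exp t]
  have h2 : (1 + t) * Real.exp (-(2 * t)) ≤ Real.exp t * Real.exp (-(2 * t)) := by
    apply mul_le_mul_of_nonneg_right h1 (Real.exp_nonneg _)
  calc (1 + t) * Real.exp (-(2 * t)) ≤ Real.exp t * Real.exp (-(2 * t)) := h2
    _ = Real.exp (-t) := by rw [← Real.exp_add]; ring_nf
    _ ≤ 1 := Real.exp_le_one_iff.mpr (by linarith)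

theorem stmt_15 (α C xbar : ℝ) (hα : 0 ≤ α) (hC : 0 ≤ C)
    (f : ℝ → ℝ) (hf : ∀ x, f x = ((x - xbar) ^ 2 + C) * Real.exp (2 * α * x)) :
    f (xbar - α * C) ≤ f xbar ∧
    f xbar = C * Real.exp (2 * α * xbar) ∧
    (1 + α ^ 2 * C) * Real.exp (-(2 * α ^ 2 * C)) ≤ 1 := by
  have ht : 0 ≤ α ^ 2 * C := by positivity
  have hk := key (α ^ 2 * C) ht
  refine ⟨?_, ?_, by simpa [mul_assoc] using hk⟩
  · rw [hf, hf]
    have hexp : Real.exp (2 * α * (xbar - α * C))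
        = Real.exp (2 * α * xbar) * Real.exp (-(2 * (α ^ 2 * C))) := by
      rw [← Real.exp_add]; ring_nf
    have h1 : ((xbar - α * C - xbar) ^ 2 + C) = C * (1 + α ^ 2 * C) := by ring
    rw [hexp, h1]
    have : C * (1 + α ^ 2 * C) * (Real.exp (2 * α * xbar) * Real.exp (-(2 * (α ^ 2 * C))))
        = C * Real.exp (2 * α * xbar) * ((1 + α ^ 2 * C) * Real.exp (-(2 * (α ^ 2 * C)))) := by
      ring
    rw [this]
    calc C * Real.exp (2 * α * xbar) * ((1 + α ^ 2 * C) * Real.exp (-(2 * (α ^ 2 * C))))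
        ≤ C * Real.exp (2 * α * xbar) * 1 := by
          apply mul_le_mul_of_nonneg_left _ (by positivity)
          simpa [mul_assoc] using hk
      _ = (xbar - xbar) ^ 2 * Real.exp (2 * α * xbar) + C * Real.exp (2 * α * xbar) := by ring
      _ = ((xbar - xbar) ^ 2 + C) * Real.exp (2 * α * xbar) := by ring
  · rw [hf]; ring_nf
end
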